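/- Let A be a commutative ring. The residue pairing A((t)) × A((t)) → A, (f, g) ↦ res(f g dt) := coefficient of t^{-1} in fg, is perfect in the following sense: the induced map from A((t)) to the A-module of A-linear functionals χ : A((t)) → A satisfying χ(t^l A[[t]]) = 0 for some l (i.e. continuous functionals), sending f to (g ↦ [fg]_{-1}), is an isomorphism of A-modules. -/

import Mathlib

open HahnSeries

/-- An `A`-linear functional `χ : A((t)) → A` is continuous (for the topology with base of
neighborhoods of zero `tˡA[[t]]`, `l ∈ ℤ`, and the discrete topology on `A`) iff it kills
some `tˡA[[t]]`, i.e. kills all series whose coefficients vanish below some bound `e`. -/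
def IsContFunctional {A : Type*} [CommRing A] (χ : LaurentSeries A →ₗ[A] A) : Prop :=
  ∃ e : ℤ, ∀ f : LaurentSeries A, (∀ i : ℤ, i < e → f.coeff i = 0) → χ f = 0

section ResAux

variable {A : Type*} [CommRing A]

/-- The residue pairing as a bilinear map. -/
noncomputable def resTau : LaurentSeries A →ₗ[A] (LaurentSeries A →ₗ[A] A) :=
  LinearMap.mk₂ A (fun f g => (f * g).coeff (-1))
    (fun f f' g => by rw [add_mul, HahnSeries.coeff_add])
    (fun c f g => by
      rw [← HahnSeries.single_zero_mul_eq_smul, mul_assoc, HahnSeries.coeff_single_zero_mul]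
      rfl)
    (fun f g g' => by rw [mul_add, HahnSeries.coeff_add])
    (fun c f g => by
      rw [← HahnSeries.single_zero_mul_eq_smul, ← mul_assoc, mul_comm f,
        mul_assoc, HahnSeries.coeff_single_zero_mul]
      rfl)

lemma resTau_apply (f g : LaurentSeries A) : resTau f g = (f * g).coeff (-1) := rfl

lemma coeff_mul_neg_one_eq_zero {f g : LaurentSeries A}
    (h : ∀ i j : ℤ, i + j = -1 → f.coeff i * g.coeff j = 0) :
    (f * g).coeff (-1) = 0 := by
  rw [HahnSeries.coeff_mul]
  apply Finset.sum_eq_zero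
  intro ij hij
  rw [Finset.mem_addAntidiagonal] at hij
  exact h ij.1 ij.2 hij.2.2

lemma resTau_single (f : LaurentSeries A) (m : ℤ) (c : A) :
    resTau f (HahnSeries.single m c) = f.coeff (-1 - m) * c := by
  have h := HahnSeries.coeff_mul_single_add (r := c) (x := f) (a := -1 - m) (b := m)
  rw [show (-1 - m) + m = (-1 : ℤ) by ring] at h
  rw [resTau_apply, h]

lemma single_eq_smul (m : ℤ) (c : A) :
    (HahnSeries.single m c : LaurentSeries A) = c • HahnSeries.single m 1 := by
  ext k
  rw [HahnSeries.coeff_smul, HahnSeries.coeff_single, HahnSeries.coeff_single]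
  split <;> simp

end ResAux

/-- Self-duality of `A((t))` via the residue pairing `(f, g) ↦ [fg]₋₁`: the `A`-linear
map `τ : f ↦ (g ↦ [fg]₋₁)` takes values in continuous functionals, is injective, and
every continuous `A`-linear functional is `τ f` for a unique `f`. -/
theorem residue_pairing_perfect {A : Type*} [CommRing A] :
    ∃ τ : LaurentSeries A →ₗ[A] (LaurentSeries A →ₗ[A] A),
      (∀ f g : LaurentSeries A, τ f g = (f * g).coeff (-1)) ∧
      (∀ f : LaurentSeries A, IsContFunctional (τ f)) ∧
      Function.Injective τ ∧
      (∀ χ : LaurentSeries A →ₗ[A] A, IsContFunctional χ → ∃ f, τ f = χ) := by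
  refine ⟨resTau, fun f g => rfl, ?_, ?_, ?_⟩
  · -- continuity
    intro f
    by_cases hf : f = 0
    · exact ⟨0, fun g _ => by simp [hf]⟩
    · refine ⟨-f.order, fun g hg => ?_⟩
      rw [resTau_apply]
      apply coeff_mul_neg_one_eq_zero
      intro i j hij
      by_cases hi : i < f.order
      · rw [HahnSeries.coeff_eq_zero_of_lt_order hi, zero_mul]
      · rw [hg j (by omega), mul_zero]
  · -- injectivity
    have key : ∀ f : LaurentSeries A, resTau f = 0 → f = 0 := by
      intro f hf
      ext i
      have := congrFun (congrArg DFunLike.coe hf) (HahnSeries.single (-1 - i) 1)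
      rw [resTau_single] at this
      simpa [show (-1 : ℤ) - (-1 - i) = i by ring] using this
    intro a b hab
    have : a - b = 0 := key _ (by rw [map_sub, hab, sub_self])
    exact sub_eq_zero.mp this
  · -- surjectivity
    intro χ ⟨e, he⟩
    -- the candidate preimage
    have hker : ∀ i : ℤ, i ≤ -1 - e → χ (HahnSeries.single (-1 - i) 1) = 0 := by
      intro i hi
      apply he
      intro k hk
      apply HahnSeries.coeff_single_of_ne
      omega
    have hpwo : (Function.support fun i : ℤ => χ (HahnSeries.single (-1 - i) 1)).IsPWO := by
      apply Set.IsWF.isPWO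
      apply BddBelow.wellFoundedOn_lt
      refine ⟨-1 - e, fun x hx => ?_⟩
      by_contra h
      exact hx (hker x (by omega))
    set f : LaurentSeries A := ⟨fun i => χ (HahnSeries.single (-1 - i) 1), hpwo⟩ with hfdef
    have hfcoeff : ∀ i : ℤ, f.coeff i = χ (HahnSeries.single (-1 - i) 1) := fun _ => rfl
    refine ⟨f, ?_⟩
    have hsingle : ∀ (m : ℤ) (c : A),
        resTau f (HahnSeries.single m c) = χ (HahnSeries.single m c) := by
      intro m c
      rw [resTau_single, hfcoeff, show (-1 : ℤ) - (-1 - m) = m by ring]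
      conv_rhs => rw [single_eq_smul, map_smul]
      rw [smul_eq_mul, mul_comm]
    ext g
    -- decompose g
    have hwf : (g.support ∩ Set.Iio e).IsWF := g.isWF_support.subset Set.inter_subset_left
    have hfin : (g.support ∩ Set.Iio e).Finite := by
      rcases Set.eq_empty_or_nonempty (g.support ∩ Set.Iio e) with h | h
      · simp [h]
      · refine Set.Finite.subset (Set.finite_Icc (hwf.min h) e) fun x hx => ?_
        exact ⟨hwf.min_le h hx, le_of_lt hx.2⟩
    set S : Finset ℤ := hfin.toFinset with hS
    set gs : LaurentSeries A := ∑ j ∈ S, HahnSeries.single j (g.coeff j) with hgs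
    have hgs_coeff : ∀ k : ℤ, gs.coeff k = if k ∈ S then g.coeff k else 0 := by
      intro k
      have : gs.coeff k = ∑ j ∈ S, (HahnSeries.single j (g.coeff j)).coeff k := by
        rw [hgs]
        exact map_sum (HahnSeries.coeff.addMonoidHom k) _ S
      rw [this]
      by_cases hk : k ∈ S
      · rw [Finset.sum_eq_single k (fun j _ hj => HahnSeries.coeff_single_of_ne (Ne.symm hj))
          (fun h => absurd hk h), HahnSeries.coeff_single_same, if_pos hk]
      · rw [if_neg hk]
        apply Finset.sum_eq_zero
        intro j hj
        exact HahnSeries.coeff_single_of_ne (fun h => hk (h ▸ hj))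
    have hr : ∀ k : ℤ, k < e → (g - gs).coeff k = 0 := by
      intro k hk
      rw [HahnSeries.coeff_sub, hgs_coeff]
      by_cases hks : k ∈ S
      · rw [if_pos hks, sub_self]
      · rw [if_neg hks, sub_zero]
        by_contra h
        exact hks (by rw [hS, Set.Finite.mem_toFinset]; exact ⟨h, hk⟩)
    have h1 : resTau f (g - gs) = 0 := by
      rw [resTau_apply]
      apply coeff_mul_neg_one_eq_zero
      intro i j hij
      by_cases hi : i ≤ -1 - e
      · rw [hfcoeff, hker i hi, zero_mul]
      · rw [hr j (by omega), mul_zero]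
    have h2 : χ (g - gs) = 0 := he _ hr
    have h3 : resTau f gs = χ gs := by
      rw [hgs, map_sum, map_sum]
      exact Finset.sum_congr rfl fun j _ => hsingle j (g.coeff j)
    have := congrArg₂ (· + ·) h3 (h1.trans h2.symm)
    simpa [← map_add] using this
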